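/- If Δ is an ideal hyperbolic 3-simplex with one dihedral angle α ≥ π/2, then vol(Δ) ≤ G, where G is Catalan's constant; the bound is attained by the ideal simplex with angles (π/2, π/4, π/4). -/

import Mathlib

open Real
noncomputable section

open MeasureTheory Set intervalIntegral Filter

lemma il01 : IntervalIntegrable Real.log volume 0 1 := by
  have h : IntervalIntegrable (fun x : ℝ => -(Real.log x)) volume 0 1 := by
    apply intervalIntegrable_deriv_of_nonneg (g := fun x : ℝ => x - x * Real.log x)
    · exact (continuous_id.sub Real.continuous_mul_log).continuousOn
    · intro x hx
      simp only [Set.mem_Ioo, min_def, max_def] at hx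
      have hx0 : (0:ℝ) < x := by rcases hx with ⟨h1, h2⟩; norm_num at h1 h2 ⊢; linarith [h1]
      have := ((hasDerivAt_id x).sub (((hasDerivAt_id x).mul (Real.hasDerivAt_log hx0.ne'))))
      refine this.congr_deriv ?_
      simp only [id, one_mul, mul_inv_cancel₀ hx0.ne']; ring
    · intro x hx
      simp only [min_def, max_def] at hx; norm_num at hx
      have : Real.log x ≤ 0 := Real.log_nonpos (le_of_lt hx.1) (le_of_lt hx.2)
      linarith
  have := h.neg
  convert this using 1
  ext x; simp

/-- The Lobachevsky function `L(θ) = -∫₀^θ log |2 sin u| du`. -/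
def lobachevsky (θ : ℝ) : ℝ := -∫ u in (0:ℝ)..θ, log |2 * sin u|

/-- Catalan's constant `G = Σ_{k≥0} (-1)^k/(2k+1)²`. -/
def catalanConst : ℝ := ∑' k : ℕ, (-1) ^ k / (2 * (k : ℝ) + 1) ^ 2

noncomputable def F (u : ℝ) : ℝ := Real.log |2 * Real.sin u|



lemma F_meas : Measurable F :=
  Real.measurable_log.comp ((measurable_const.mul Real.measurable_sin).abs)

lemma ilF_small : IntervalIntegrable F volume 0 (π/4) := by
  have hπ : (0:ℝ) < π/4 := by positivity
  apply IntervalIntegrable.mono_fun' (g := fun u => Real.log 2 - Real.log u)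
  · exact (_root_.intervalIntegrable_const (c := Real.log 2)).sub
      (il01.mono_set (by rw [Set.uIcc_of_le hπ.le, Set.uIcc_of_le zero_le_one]
                         exact Set.Icc_subset_Icc le_rfl (by linarith [pi_le_four])))
  · exact F_meas.aestronglyMeasurable
  · rw [Filter.EventuallyLE, ae_restrict_iff' measurableSet_uIoc]
    refine Filter.Eventually.of_forall fun u hu => ?_
    rw [Set.uIoc_of_le hπ.le] at hu
    obtain ⟨hu0, hu1⟩ := hu
    have hu2 : u ≤ π/2 := by linarith [pi_pos]
    have hs0 : 0 < Real.sin u := Real.sin_pos_of_pos_of_lt_pi hu0 (by linarith [pi_pos])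
    have hle : Real.sin u ≤ u := Real.sin_le hu0.le
    have hge : u ≤ 2 * Real.sin u := by
      have := Real.mul_le_sin hu0.le hu2
      have h4 : 2 / π * u * 2 ≥ u := by
        rw [ge_iff_le, div_mul_eq_mul_div, div_mul_eq_mul_div, le_div_iff₀ pi_pos]
        nlinarith [pi_le_four, hu0]
      nlinarith
    have habs : |2 * Real.sin u| = 2 * Real.sin u := abs_of_pos (by linarith)
    have hu1' : u ≤ 1 := by linarith [pi_le_four]
    have hlogu : Real.log u ≤ 0 := Real.log_nonpos hu0.le hu1'
    simp only [F, Real.norm_eq_abs, habs]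
    rw [abs_le]
    constructor
    · have : Real.log u ≤ Real.log (2 * Real.sin u) := Real.log_le_log (by linarith) hge
      linarith [Real.log_nonneg (by norm_num : (1:ℝ) ≤ 2)]
    · have : Real.log (2 * Real.sin u) ≤ Real.log (2 * u) :=
        Real.log_le_log (by linarith) (by linarith)
      rw [Real.log_mul two_ne_zero hu0.ne'] at this
      linarith

lemma F_contOn {a b : ℝ} (ha : 0 < a) (haπ : a < π) (hb : 0 < b) (hbπ : b < π) :
    ContinuousOn F (Set.uIcc a b) := by
  apply ContinuousOn.log
  · exact ((continuous_const.mul Real.continuous_sin).abs).continuousOn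
  · intro x hx
    rw [Set.mem_uIcc] at hx
    have hx0 : 0 < x := by rcases hx with h | h <;> linarith [h.1, h.2]
    have hxπ : x < π := by rcases hx with h | h <;> linarith [h.1, h.2]
    have := Real.sin_pos_of_pos_of_lt_pi hx0 hxπ
    simp only [abs_ne_zero]
    positivity

lemma ilF {θ : ℝ} (h0 : 0 ≤ θ) (hπ : θ < π) : IntervalIntegrable F volume 0 θ := by
  rcases le_total θ (π/4) with h | h
  · exact ilF_small.mono_set (by rw [Set.uIcc_of_le h0, Set.uIcc_of_le (by positivity)]
                                 exact Set.Icc_subset_Icc le_rfl h)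
  · have h0' : (0:ℝ) < θ := lt_of_lt_of_le (by positivity) h
    exact ilF_small.trans ((F_contOn (by positivity) (by linarith [pi_le_four, pi_pos]) h0' hπ).intervalIntegrable)

lemma ilF' {a b : ℝ} (ha : 0 ≤ a) (haπ : a < π) (hb : 0 ≤ b) (hbπ : b < π) :
    IntervalIntegrable F volume a b := (ilF ha haπ).symm.trans (ilF hb hbπ)


lemma F_contAt {θ : ℝ} (h0 : 0 < θ) (hπ : θ < π) : ContinuousAt F θ := by
  have hs : Real.sin θ ≠ 0 := (Real.sin_pos_of_pos_of_lt_pi h0 hπ).ne'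
  exact (Real.continuousAt_log (by simp [abs_ne_zero]; exact fun h => hs h)).comp
    ((continuous_const.mul Real.continuous_sin).abs.continuousAt)

lemma L_hasDeriv {θ : ℝ} (h0 : 0 < θ) (hπ : θ < π) :
    HasDerivAt lobachevsky (-(Real.log (2 * Real.sin θ))) θ := by
  have h1 : HasDerivAt (fun t => ∫ u in (0:ℝ)..t, F u) (F θ) θ :=
    integral_hasDerivAt_right (ilF h0.le hπ)
      (F_meas.stronglyMeasurable.stronglyMeasurableAtFilter) (F_contAt h0 hπ)
  have h2 := h1.neg
  have h3 : F θ = Real.log (2 * Real.sin θ) := by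
    have := Real.sin_pos_of_pos_of_lt_pi h0 hπ
    simp only [F, abs_of_pos (by positivity : (0:ℝ) < 2 * Real.sin θ)]
  rw [h3] at h2
  exact h2


lemma L_deriv {θ : ℝ} (h0 : 0 < θ) (hπ : θ < π) :
    deriv lobachevsky θ = -(Real.log (2 * Real.sin θ)) := (L_hasDeriv h0 hπ).deriv

lemma L_concave : ConcaveOn ℝ (Set.Ioo 0 (π/2)) lobachevsky := by
  have hsub : Set.Ioo (0:ℝ) (π/2) ⊆ Set.Ioo 0 π := by
    apply Set.Ioo_subset_Ioo le_rfl; linarith [pi_pos]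
  have hdiff : ∀ x ∈ Set.Ioo (0:ℝ) (π/2), DifferentiableAt ℝ lobachevsky x := fun x hx =>
    (L_hasDeriv hx.1 (hsub hx).2).differentiableAt
  apply AntitoneOn.concaveOn_of_deriv (convex_Ioo _ _)
  · exact fun x hx => (hdiff x hx).continuousAt.continuousWithinAt
  · rw [interior_Ioo]; exact fun x hx => (hdiff x hx).differentiableWithinAt
  · rw [interior_Ioo]
    intro x hx y hy hxy
    rw [L_deriv hx.1 (hsub hx).2, L_deriv hy.1 (hsub hy).2, neg_le_neg_iff]
    have hsx : 0 < Real.sin x := Real.sin_pos_of_pos_of_lt_pi hx.1 (hsub hx).2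
    apply Real.log_le_log (by linarith)
    have : Real.sin x ≤ Real.sin y := by
      apply Real.sin_le_sin_of_le_of_le_pi_div_two (by linarith [hx.1, pi_pos]) hy.2.le hxy
    linarith

lemma f_hasDeriv {x : ℝ} (h0 : 0 < x) (hπ : x < π) :
    HasDerivAt (fun y => lobachevsky y + 2 * lobachevsky ((π - y)/2))
      (-(Real.log (2 * Real.sin x)) + Real.log (2 * Real.sin ((π - x)/2))) x := by
  have hm0 : 0 < (π - x)/2 := by linarith
  have hmπ : (π - x)/2 < π := by linarith [pi_pos]
  have hin : HasDerivAt (fun y : ℝ => (π - y)/2) ((0 - 1)/2) x :=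
    ((hasDerivAt_const x π).sub (hasDerivAt_id x)).div_const 2
  have hcomp := ((L_hasDeriv hm0 hmπ).comp x hin).const_mul 2
  have := (L_hasDeriv h0 hπ).add hcomp
  refine this.congr_deriv ?_
  ring

lemma f_anti : AntitoneOn (fun y => lobachevsky y + 2 * lobachevsky ((π - y)/2))
    (Set.Ico (π/2) π) := by
  have hd : ∀ x ∈ Set.Ico (π/2) π, DifferentiableAt ℝ
      (fun y => lobachevsky y + 2 * lobachevsky ((π - y)/2)) x := fun x hx =>
    (f_hasDeriv (by linarith [hx.1, pi_pos]) hx.2).differentiableAt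
  apply antitoneOn_of_deriv_nonpos (convex_Ico _ _)
  · exact fun x hx => (hd x hx).continuousAt.continuousWithinAt
  · rw [interior_Ico]; exact fun x hx => (hd x (Set.Ioo_subset_Ico_self hx)).differentiableWithinAt
  · rw [interior_Ico]
    intro x hx
    obtain ⟨hxl, hxr⟩ := hx
    have h0 : (0:ℝ) < x := by linarith [pi_pos]
    rw [(f_hasDeriv h0 hxr).deriv]
    have hm : (π - x)/2 = π/2 - x/2 := by ring
    have hsm : 0 < Real.sin ((π - x)/2) := Real.sin_pos_of_pos_of_lt_pi (by linarith)
      (by linarith [pi_pos])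
    have hx2 : Real.sin (π/4) ≤ Real.sin (x/2) := by
      apply Real.sin_le_sin_of_le_of_le_pi_div_two (by linarith [pi_pos]) (by linarith) 
      linarith
    rw [Real.sin_pi_div_four] at hx2
    have hhalf : (1:ℝ)/2 ≤ Real.sin (x/2) := by
      nlinarith [Real.sq_sqrt (by norm_num : (2:ℝ) ≥ 0), Real.sqrt_nonneg 2]
    have hsinx : Real.sin x = 2 * Real.sin (x/2) * Real.sin ((π-x)/2) := by
      rw [hm, Real.sin_pi_div_two_sub, ← Real.sin_two_mul]
      congr 1; ring
    have hle : Real.sin ((π - x)/2) ≤ Real.sin x := by nlinarith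
    have := Real.log_le_log (by linarith) (by linarith : 2 * Real.sin ((π-x)/2) ≤ 2 * Real.sin x)
    linarith


lemma il_pow_log (k : ℕ) : IntervalIntegrable (fun x : ℝ => x^k * Real.log x) volume 0 1 := by
  apply IntervalIntegrable.mono_fun' (g := fun x => |Real.log x|) il01.abs
  · exact ((measurable_id.pow_const k).mul Real.measurable_log).aestronglyMeasurable
  · rw [Filter.EventuallyLE, ae_restrict_iff' measurableSet_uIoc]
    refine Filter.Eventually.of_forall fun u hu => ?_
    rw [Set.uIoc_of_le zero_le_one] at hu
    simp only [Real.norm_eq_abs, abs_mul, abs_abs]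
    have h1 : |u^k| ≤ 1 := by
      rw [abs_pow]; apply pow_le_one₀ (abs_nonneg _); rw [abs_le]; exact ⟨by linarith [hu.1], hu.2⟩
    nlinarith [abs_nonneg (Real.log u), abs_nonneg (u^k)]

lemma integral_pow_log (k : ℕ) :
    ∫ x in (0:ℝ)..1, x^k * Real.log x = -(1/(k+1)^2) := by
  have hk : ((k:ℝ)+1) ≠ 0 := by positivity
  have key := intervalIntegral.integral_eq_sub_of_hasDeriv_right_of_le (a := (0:ℝ)) (b := 1)
    (f := fun x => (x^k * (x * Real.log x))/(k+1) - x^(k+1)/((k+1)^2))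
    (f' := fun x => x^k * Real.log x) zero_le_one ?_ ?_ (il_pow_log k)
  · rw [key]; norm_num
  · apply ContinuousOn.sub
    · exact (((continuous_pow k).mul Real.continuous_mul_log).div_const _).continuousOn
    · exact ((continuous_pow (k+1)).div_const _).continuousOn
  · intro x hx
    have hx0 : (0:ℝ) < x := hx.1
    apply HasDerivAt.hasDerivWithinAt
    have h1 : HasDerivAt (fun x : ℝ => (x^k * (x * Real.log x))/(k+1) - x^(k+1)/((k+1)^2))
        (((k * x^(k-1) * (x * Real.log x)) + x^k * (Real.log x + 1))/(k+1)
          - ((k+1) * x^k)/((k+1)^2)) x := by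
      apply HasDerivAt.sub
      · apply HasDerivAt.div_const
        have ha : HasDerivAt (fun x : ℝ => x^k) (k * x^(k-1)) x := hasDerivAt_pow k x
        have hb : HasDerivAt (fun x : ℝ => x * Real.log x) (Real.log x + 1) x := by
          have := (hasDerivAt_id x).mul (Real.hasDerivAt_log hx0.ne')
          refine this.congr_deriv ?_
          simp only [id, one_mul, mul_inv_cancel₀ hx0.ne']
        exact ha.mul hb
      · apply HasDerivAt.div_const
        have := hasDerivAt_pow (k+1) x
        simpa using this
    refine h1.congr_deriv ?_
    rcases Nat.eq_zero_or_pos k with hk0 | hk0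
    · subst hk0
      norm_num
    · have hpow : x^(k-1) * x = x^k := by
        rw [← pow_succ]; congr 1; omega
      have h2 : (k:ℝ) * x^(k-1) * (x * Real.log x) = k * x^k * Real.log x := by
        rw [← hpow]; ring
      rw [h2]
      field_simp
      ring


lemma il_div (k : ℕ) :
    IntervalIntegrable (fun x : ℝ => x^k * Real.log x / (1+x^2)) volume 0 1 := by
  apply IntervalIntegrable.mono_fun' (g := fun x => |x^k * Real.log x|) (il_pow_log k).abs
  · exact (((measurable_id.pow_const k).mul Real.measurable_log).div
      (measurable_const.add (measurable_id.pow_const 2))).aestronglyMeasurable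
  · rw [Filter.EventuallyLE, ae_restrict_iff' measurableSet_uIoc]
    refine Filter.Eventually.of_forall fun u hu => ?_
    have h2 : (1:ℝ) ≤ 1 + u^2 := by nlinarith [sq_nonneg u]
    simp only [Real.norm_eq_abs, abs_div, abs_abs]
    rw [abs_of_pos (by linarith : (0:ℝ) < 1 + u^2)]
    apply div_le_of_le_mul₀ (by linarith) (abs_nonneg _)
    nlinarith [abs_nonneg (u^k * Real.log u)]

lemma pointwise_id (N : ℕ) (x : ℝ) : Real.log x / (1+x^2) =
    (∑ n ∈ Finset.range N, (-1:ℝ)^n * (x^(2*n) * Real.log x))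
      + (-1)^N * (x^(2*N) * Real.log x / (1+x^2)) := by
  have h2 : (1:ℝ) + x^2 ≠ 0 := by positivity
  have hg := geom_sum_mul (-x^2) N
  have h3 : ∀ n, (-1:ℝ)^n * (x^(2*n) * Real.log x) = (-x^2)^n * Real.log x := by
    intro n; rw [neg_pow, pow_mul]; ring
  simp_rw [h3]
  rw [← Finset.sum_mul]
  have h4 : (-1:ℝ)^N * x^(2*N) = (-x^2)^N := by rw [pow_mul, ← neg_pow]
  field_simp
  linear_combination (Real.log x) * hg - (Real.log x) * h4

lemma key (N : ℕ) : (∫ x in (0:ℝ)..1, Real.log x / (1+x^2)) =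
    -(∑ n ∈ Finset.range N, (-1:ℝ)^n / (2*(n:ℝ)+1)^2)
      + (-1)^N * ∫ x in (0:ℝ)..1, x^(2*N) * Real.log x / (1+x^2) := by
  have h1 : (∫ x in (0:ℝ)..1, Real.log x / (1+x^2)) =
      ∫ x in (0:ℝ)..1, ((∑ n ∈ Finset.range N, (-1:ℝ)^n * (x^(2*n) * Real.log x))
        + (-1)^N * (x^(2*N) * Real.log x / (1+x^2))) := by
    apply intervalIntegral.integral_congr
    intro x _
    exact pointwise_id N x
  have hint1 : ∀ n : ℕ, IntervalIntegrable (fun x : ℝ => (-1:ℝ)^n * (x^(2*n) * Real.log x))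
      volume 0 1 := fun n => (il_pow_log (2*n)).const_mul _
  have hint2 : IntervalIntegrable
      (fun x : ℝ => (∑ n ∈ Finset.range N, (-1:ℝ)^n * (x^(2*n) * Real.log x))) volume 0 1 := by
    have h := IntervalIntegrable.sum (μ := volume) (a := (0:ℝ)) (b := 1)
      (Finset.range N) (fun n _ => hint1 n)
    have he : (∑ n ∈ Finset.range N, fun x : ℝ => (-1:ℝ)^n * (x^(2*n) * Real.log x)) =
        (fun x : ℝ => (∑ n ∈ Finset.range N, (-1:ℝ)^n * (x^(2*n) * Real.log x))) := by
      ext x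
      simp [Finset.sum_apply]
    rwa [he] at h
  have hint3 : IntervalIntegrable (fun x : ℝ => (-1:ℝ)^N * (x^(2*N) * Real.log x / (1+x^2)))
      volume 0 1 := (il_div (2*N)).const_mul _
  have h2 : (∫ x in (0:ℝ)..1, ((∑ n ∈ Finset.range N, (-1:ℝ)^n * (x^(2*n) * Real.log x))
        + (-1)^N * (x^(2*N) * Real.log x / (1+x^2)))) =
      (∫ x in (0:ℝ)..1, (∑ n ∈ Finset.range N, (-1:ℝ)^n * (x^(2*n) * Real.log x)))
        + ∫ x in (0:ℝ)..1, (-1:ℝ)^N * (x^(2*N) * Real.log x / (1+x^2)) :=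
    intervalIntegral.integral_add hint2 hint3
  have h3 : (∫ x in (0:ℝ)..1, (∑ n ∈ Finset.range N, (-1:ℝ)^n * (x^(2*n) * Real.log x))) =
      ∑ n ∈ Finset.range N, ∫ x in (0:ℝ)..1, (-1:ℝ)^n * (x^(2*n) * Real.log x) :=
    intervalIntegral.integral_finset_sum (fun n _ => hint1 n)
  have h4 : ∀ n : ℕ, (∫ x in (0:ℝ)..1, (-1:ℝ)^n * (x^(2*n) * Real.log x))
      = -((-1:ℝ)^n / (2*(n:ℝ)+1)^2) := by
    intro n
    rw [intervalIntegral.integral_const_mul, integral_pow_log]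
    push_cast
    field_simp
  have h5 : (∫ x in (0:ℝ)..1, (-1:ℝ)^N * (x^(2*N) * Real.log x / (1+x^2)))
      = (-1:ℝ)^N * ∫ x in (0:ℝ)..1, x^(2*N) * Real.log x / (1+x^2) :=
    intervalIntegral.integral_const_mul _ _
  rw [h1, h2, h3, h5]
  congr 1
  rw [← Finset.sum_neg_distrib]
  exact Finset.sum_congr rfl fun n _ => h4 n

lemma remainder_bound (N : ℕ) :
    |∫ x in (0:ℝ)..1, x^(2*N) * Real.log x / (1+x^2)| ≤ 1/(2*(N:ℝ)+1)^2 := by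
  have h1 : |∫ x in (0:ℝ)..1, x^(2*N) * Real.log x / (1+x^2)|
      ≤ ∫ x in (0:ℝ)..1, |x^(2*N) * Real.log x / (1+x^2)| :=
    intervalIntegral.abs_integral_le_integral_abs zero_le_one
  have h2 : (∫ x in (0:ℝ)..1, |x^(2*N) * Real.log x / (1+x^2)|)
      ≤ ∫ x in (0:ℝ)..1, -(x^(2*N) * Real.log x) := by
    apply intervalIntegral.integral_mono_on zero_le_one (il_div (2*N)).abs (il_pow_log (2*N)).neg
    intro x hx
    obtain ⟨hx0, hx1⟩ := hx
    have hlog : Real.log x ≤ 0 := Real.log_nonpos hx0 hx1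
    have hp : (0:ℝ) ≤ x^(2*N) := by positivity
    have h12 : (1:ℝ) ≤ 1 + x^2 := by nlinarith
    rw [abs_div, abs_of_pos (by linarith : (0:ℝ) < 1+x^2), abs_mul, abs_of_nonneg hp,
      abs_of_nonpos hlog]
    calc x^(2*N) * -Real.log x / (1+x^2) ≤ x^(2*N) * -Real.log x / 1 := by
          apply div_le_div_of_nonneg_left (by nlinarith) one_pos h12
      _ = -(x^(2*N) * Real.log x) := by ring
  have h3 : (∫ x in (0:ℝ)..1, -(x^(2*N) * Real.log x)) = 1/(2*(N:ℝ)+1)^2 := by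
    rw [intervalIntegral.integral_neg, integral_pow_log]
    push_cast
    ring
  linarith


lemma catalan_summable : Summable (fun k : ℕ => (-1:ℝ) ^ k / (2 * (k : ℝ) + 1) ^ 2) := by
  apply Summable.of_abs
  have hcomp : Summable (fun k : ℕ => 1 / ((k:ℝ)+1) ^ 2) := by
    have h := (Real.summable_one_div_nat_pow (p := 2)).mpr one_lt_two
    have h2 := (summable_nat_add_iff 1).mpr h
    apply h2.congr
    intro n
    push_cast
    ring
  apply Summable.of_nonneg_of_le (fun k => abs_nonneg _) _ hcomp
  intro k
  rw [abs_div, abs_pow, abs_neg, abs_one, one_pow, abs_of_pos (by positivity : (0:ℝ) < (2*(k:ℝ)+1)^2)]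
  apply one_div_le_one_div_of_le (by positivity)
  have : (0:ℝ) ≤ (k:ℝ) := Nat.cast_nonneg k
  nlinarith

lemma integral_log_div_one_add_sq :
    (∫ x in (0:ℝ)..1, Real.log x / (1+x^2)) = -catalanConst := by
  have hS : Filter.Tendsto (fun N => ∑ n ∈ Finset.range N, (-1:ℝ)^n / (2*(n:ℝ)+1)^2)
      Filter.atTop (nhds catalanConst) := catalan_summable.hasSum.tendsto_sum_nat
  have hR : Filter.Tendsto (fun N => (-1:ℝ)^N * ∫ x in (0:ℝ)..1, x^(2*N) * Real.log x / (1+x^2))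
      Filter.atTop (nhds 0) := by
    have h1 : Filter.Tendsto (fun N : ℕ => 2*(N:ℝ)+1) Filter.atTop Filter.atTop :=
      Filter.tendsto_atTop_add_const_right _ 1
        (Filter.Tendsto.const_mul_atTop two_pos tendsto_natCast_atTop_atTop)
    have h2 : Filter.Tendsto (fun N : ℕ => (2*(N:ℝ)+1)^2) Filter.atTop Filter.atTop := by
      simp_rw [sq]
      exact h1.atTop_mul_atTop₀ h1
    have h3 : Filter.Tendsto (fun N : ℕ => 1/(2*(N:ℝ)+1)^2) Filter.atTop (nhds 0) := by
      have := tendsto_inv_atTop_zero.comp h2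
      simpa [one_div, Function.comp_def] using this
    apply squeeze_zero_norm _ h3
    intro N
    rw [norm_mul, norm_pow, norm_neg, norm_one, one_pow, one_mul, Real.norm_eq_abs]
    exact remainder_bound N
  have hconst : Filter.Tendsto (fun N : ℕ => (∫ x in (0:ℝ)..1, Real.log x / (1+x^2)))
      Filter.atTop (nhds (∫ x in (0:ℝ)..1, Real.log x / (1+x^2))) := tendsto_const_nhds
  have heq : (fun N : ℕ => (∫ x in (0:ℝ)..1, Real.log x / (1+x^2))) =
      (fun N => -(∑ n ∈ Finset.range N, (-1:ℝ)^n / (2*(n:ℝ)+1)^2)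
        + (-1)^N * ∫ x in (0:ℝ)..1, x^(2*N) * Real.log x / (1+x^2)) := by
    ext N
    exact key N
  rw [heq] at hconst
  have hlim : Filter.Tendsto (fun N => -(∑ n ∈ Finset.range N, (-1:ℝ)^n / (2*(n:ℝ)+1)^2)
        + (-1)^N * ∫ x in (0:ℝ)..1, x^(2*N) * Real.log x / (1+x^2))
      Filter.atTop (nhds (-catalanConst + 0)) := (hS.neg).add hR
  have := tendsto_nhds_unique hconst hlim
  rw [this, add_zero]


lemma il_J : IntervalIntegrable (fun x : ℝ => Real.log x / (1+x^2)) volume 0 1 := by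
  have h := il_div 0
  have he : (fun x : ℝ => x^0 * Real.log x/(1+x^2)) = fun x : ℝ => Real.log x/(1+x^2) := by
    ext x; norm_num
  rwa [he] at h

lemma cont_log_two_cos : ContinuousOn (fun u : ℝ => Real.log |2 * Real.cos u|)
    (Set.Icc 0 (π/4)) := by
  apply ContinuousOn.log ((continuous_const.mul Real.continuous_cos).abs.continuousOn)
  intro x hx
  have : 0 < Real.cos x := Real.cos_pos_of_mem_Ioo
    ⟨by linarith [hx.1, pi_pos], by linarith [hx.2, pi_pos]⟩
  simp only [abs_ne_zero]
  exact mul_ne_zero two_ne_zero this.ne'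

lemma il_cos : IntervalIntegrable (fun u : ℝ => Real.log |2 * Real.cos u|) volume 0 (π/4) := by
  apply ContinuousOn.intervalIntegrable
  rw [Set.uIcc_of_le (by positivity : (0:ℝ) ≤ π/4)]
  exact cont_log_two_cos

-- B = ∫_{π/4}^{π/2} F
lemma B_eq : (∫ u in (0:ℝ)..(π/4), Real.log |2 * Real.cos u|) = ∫ u in (π/4)..(π/2), F u := by
  have h := intervalIntegral.integral_comp_sub_left (a := (0:ℝ)) (b := π/4) F (π/2)
  have h2 : (fun x : ℝ => F (π/2 - x)) = fun x : ℝ => Real.log |2 * Real.cos x| := by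
    ext x
    simp only [F, Real.sin_pi_div_two_sub]
  rw [h2] at h
  rw [h]
  congr 1 <;> ring

lemma AB_zero : (∫ u in (0:ℝ)..(π/4), F u) + (∫ u in (0:ℝ)..(π/4), Real.log |2 * Real.cos u|)
    = 0 := by
  have hsplit : (∫ u in (0:ℝ)..(π/2), F u) =
      (∫ u in (0:ℝ)..(π/4), F u) + ∫ u in (π/4)..(π/2), F u := by
    rw [intervalIntegral.integral_add_adjacent_intervals ilF_small
      (ilF' (by positivity) (by linarith [pi_pos]) (by positivity) (by linarith [pi_pos]))]
  have hhalf : (∫ x in (0:ℝ)..(π/4), F (2*x)) = (1/2 : ℝ) * ∫ u in (0:ℝ)..(π/2), F u := by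
    have h := intervalIntegral.integral_comp_mul_left (a := (0:ℝ)) (b := π/4) (f := F)
      (two_ne_zero (α := ℝ))
    rw [h]
    have e1 : (2:ℝ) * 0 = 0 := by ring
    have e2 : (2:ℝ) * (π/4) = π/2 := by ring
    rw [e1, e2, smul_eq_mul]
    norm_num
  have hcongr : (∫ x in (0:ℝ)..(π/4), F (2*x)) =
      ∫ x in (0:ℝ)..(π/4), (F x + Real.log |2 * Real.cos x|) := by
    apply intervalIntegral.integral_congr_ae
    refine Filter.Eventually.of_forall fun x hx => ?_
    rw [Set.uIoc_of_le (by positivity : (0:ℝ) ≤ π/4)] at hx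
    have hs : 0 < Real.sin x := Real.sin_pos_of_pos_of_lt_pi hx.1 (by linarith [hx.2, pi_pos])
    have hc : 0 < Real.cos x := Real.cos_pos_of_mem_Ioo
      ⟨by linarith [hx.1, pi_pos], by linarith [hx.2, pi_pos]⟩
    have h2 : (2:ℝ) * Real.sin (2*x) = (2 * Real.sin x) * (2 * Real.cos x) := by
      rw [Real.sin_two_mul]; ring
    simp only [F, h2, abs_mul]
    rw [Real.log_mul (by simp [abs_ne_zero]; positivity) (by simp [abs_ne_zero]; positivity)]
  have hadd : (∫ x in (0:ℝ)..(π/4), (F x + Real.log |2 * Real.cos x|)) =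
      (∫ u in (0:ℝ)..(π/4), F u) + ∫ u in (0:ℝ)..(π/4), Real.log |2 * Real.cos u| :=
    intervalIntegral.integral_add ilF_small il_cos
  have := hcongr.symm.trans hhalf
  rw [hadd, hsplit, ← B_eq] at this
  set A := (∫ u in (0:ℝ)..(π/4), F u)
  set B := (∫ u in (0:ℝ)..(π/4), Real.log |2 * Real.cos u|)
  have hfin : A + B = (1/2 : ℝ) * (A + B) := this
  linarith

lemma il_logtan : IntervalIntegrable (fun u : ℝ => Real.log (Real.tan u)) volume 0 (π/4) := by
  have hFB : IntervalIntegrable (fun u : ℝ => F u - Real.log |2 * Real.cos u|) volume 0 (π/4) :=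
    ilF_small.sub il_cos
  rw [intervalIntegrable_iff] at hFB ⊢
  rw [Set.uIoc_of_le (by positivity : (0:ℝ) ≤ π/4)] at hFB ⊢
  apply hFB.congr_fun ?_ measurableSet_Ioc
  intro x hx
  have hs : 0 < Real.sin x := Real.sin_pos_of_pos_of_lt_pi hx.1 (by linarith [hx.2, pi_pos])
  have hc : 0 < Real.cos x := Real.cos_pos_of_mem_Ioo
    ⟨by linarith [hx.1, pi_pos], by linarith [hx.2, pi_pos]⟩
  simp only [F, Real.tan_eq_sin_div_cos, abs_of_pos (by positivity : (0:ℝ) < 2 * Real.sin x),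
    abs_of_pos (by positivity : (0:ℝ) < 2 * Real.cos x)]
  rw [Real.log_div hs.ne' hc.ne', Real.log_mul two_ne_zero hs.ne',
    Real.log_mul two_ne_zero hc.ne']
  ring

lemma C_eq_AB : (∫ u in (0:ℝ)..(π/4), Real.log (Real.tan u)) =
    (∫ u in (0:ℝ)..(π/4), F u) - ∫ u in (0:ℝ)..(π/4), Real.log |2 * Real.cos u| := by
  rw [← intervalIntegral.integral_sub ilF_small il_cos]
  apply intervalIntegral.integral_congr_ae
  refine Filter.Eventually.of_forall fun x hx => ?_
  rw [Set.uIoc_of_le (by positivity : (0:ℝ) ≤ π/4)] at hx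
  have hs : 0 < Real.sin x := Real.sin_pos_of_pos_of_lt_pi hx.1 (by linarith [hx.2, pi_pos])
  have hc : 0 < Real.cos x := Real.cos_pos_of_mem_Ioo
    ⟨by linarith [hx.1, pi_pos], by linarith [hx.2, pi_pos]⟩
  simp only [F, Real.tan_eq_sin_div_cos, abs_of_pos (by positivity : (0:ℝ) < 2 * Real.sin x),
    abs_of_pos (by positivity : (0:ℝ) < 2 * Real.cos x)]
  rw [Real.log_div hs.ne' hc.ne', Real.log_mul two_ne_zero hs.ne',
    Real.log_mul two_ne_zero hc.ne']
  ring

lemma C_eq_J : (∫ u in (0:ℝ)..(π/4), Real.log (Real.tan u)) =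
    ∫ x in (0:ℝ)..1, Real.log x / (1+x^2) := by
  have harctan01 : ∀ x ∈ Set.Ioo (0:ℝ) 1, Real.arctan x ∈ Set.Ioo 0 (π/4) := by
    intro x hx
    constructor
    · rw [← Real.arctan_zero]; exact Real.arctan_strictMono hx.1
    · rw [← Real.arctan_one]; exact Real.arctan_strictMono hx.2
  have key := intervalIntegral.integral_comp_smul_deriv''' (a := (0:ℝ)) (b := 1)
    (f := Real.arctan) (f' := fun x => 1/(1+x^2)) (g := fun u => Real.log (Real.tan u))
    (Real.continuous_arctan.continuousOn) ?_ ?_ ?_ ?_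
  · rw [Real.arctan_zero, Real.arctan_one] at key
    rw [← key]
    apply intervalIntegral.integral_congr
    intro x _
    simp only [Function.comp, Real.tan_arctan, smul_eq_mul]
    ring
  · intro x hx
    have := Real.hasDerivAt_arctan x
    have h1 : (1:ℝ) / (1 + x^2) = 1 / (1 + x^2) := rfl
    simpa using this.hasDerivWithinAt
  · -- continuity of log ∘ tan on arctan '' Ioo 0 1
    rw [min_def, max_def]
    norm_num
    intro y hy
    obtain ⟨x, hx, rfl⟩ := hy
    have hmem := harctan01 x hx
    have hcos : Real.cos (Real.arctan x) ≠ 0 := by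
      have := Real.cos_pos_of_mem_Ioo (⟨by linarith [hmem.1, pi_pos], by linarith [hmem.2, pi_pos]⟩ :
        Real.arctan x ∈ Set.Ioo (-(π/2)) (π/2))
      positivity
    have htan : 0 < Real.tan (Real.arctan x) := by
      rw [Real.tan_arctan]; exact hx.1
    apply ContinuousWithinAt.mono ?_ (Set.subset_univ _)
    apply ContinuousAt.continuousWithinAt
    exact (Real.continuousAt_log htan.ne').comp (Real.continuousAt_tan.mpr hcos)
  · -- integrability of log ∘ tan on arctan '' [[0,1]]
    have hsub : Real.arctan '' (Set.uIcc 0 1) ⊆ Set.Icc 0 (π/4) := by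
      intro y hy
      obtain ⟨x, hx, rfl⟩ := hy
      rw [Set.uIcc_of_le zero_le_one] at hx
      constructor
      · rw [← Real.arctan_zero]; exact Real.arctan_strictMono.monotone hx.1
      · rw [← Real.arctan_one]; exact Real.arctan_strictMono.monotone hx.2
    apply MeasureTheory.IntegrableOn.mono_set ?_ hsub
    rw [integrableOn_Icc_iff_integrableOn_Ioc]
    have h := il_logtan
    rw [intervalIntegrable_iff, Set.uIoc_of_le (by positivity : (0:ℝ) ≤ π/4)] at h
    exact h
  · -- integrability of x ↦ (1/(1+x²)) • log (tan (arctan x)) on [[0,1]]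
    have heq : (fun x : ℝ => (1/(1+x^2)) • ((fun u => Real.log (Real.tan u)) ∘ Real.arctan) x)
        = fun x : ℝ => Real.log x / (1+x^2) := by
      ext x
      simp only [Function.comp, Real.tan_arctan, smul_eq_mul]
      ring
    rw [heq]
    have h : IntervalIntegrable (fun x : ℝ => Real.log x / (1+x^2)) volume 0 1 := il_J
    rw [intervalIntegrable_iff'] at h
    rwa [Set.uIcc_of_le zero_le_one] at h ⊢

lemma identity_lemma : lobachevsky (π/2) + lobachevsky (π/4) + lobachevsky (π/4) = catalanConst := by
  have hL4 : lobachevsky (π/4) = -∫ u in (0:ℝ)..(π/4), F u := rfl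
  have hL2 : lobachevsky (π/2) = -∫ u in (0:ℝ)..(π/2), F u := rfl
  have hsplit : (∫ u in (0:ℝ)..(π/2), F u) =
      (∫ u in (0:ℝ)..(π/4), F u) + ∫ u in (π/4)..(π/2), F u :=
    (intervalIntegral.integral_add_adjacent_intervals ilF_small
      (ilF' (by positivity) (by linarith [pi_pos]) (by positivity) (by linarith [pi_pos]))).symm
  have hC := C_eq_J.trans integral_log_div_one_add_sq
  rw [C_eq_AB] at hC
  have hAB := AB_zero
  rw [hL4, hL2, hsplit, ← B_eq]
  linarith

/-- If `Δ` is a (nondegenerate) ideal hyperbolic 3-simplex with dihedral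
angles `α, β, γ > 0`, `α + β + γ = π`, and one angle `α ≥ π/2`, then its volume
`vol(Δ) = L(α) + L(β) + L(γ)` (Milnor's formula) is at most Catalan's constant `G`;
the bound is attained by the ideal simplex with angles `(π/2, π/4, π/4)`. -/
theorem ideal_one_obtuse_volume_le_catalan (α β γ : ℝ)
    (hα : π / 2 ≤ α) (hβ : 0 < β) (hγ : 0 < γ) (hsum : α + β + γ = π) :
    lobachevsky α + lobachevsky β + lobachevsky γ ≤ catalanConst ∧
      lobachevsky (π / 2) + lobachevsky (π / 4) + lobachevsky (π / 4) = catalanConst := by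
  have hid := identity_lemma
  refine ⟨?_, hid⟩
  have hπ : (0:ℝ) < π := pi_pos
  have hαπ : α < π := by linarith
  have hβ2 : β < π/2 := by linarith
  have hγ2 : γ < π/2 := by linarith
  have hm : (π - α)/2 = (1/2 : ℝ) • β + (1/2 : ℝ) • γ := by
    simp only [smul_eq_mul]; linarith
  have step1 : (1/2 : ℝ) • lobachevsky β + (1/2 : ℝ) • lobachevsky γ ≤
      lobachevsky ((π - α)/2) := by
    rw [hm]
    exact L_concave.2 ⟨hβ, hβ2⟩ ⟨hγ, hγ2⟩ (by norm_num) (by norm_num) (by norm_num)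
  have step2 : lobachevsky α + 2 * lobachevsky ((π - α)/2) ≤
      lobachevsky (π/2) + 2 * lobachevsky ((π - π/2)/2) :=
    f_anti ⟨le_refl _, by linarith⟩ ⟨hα, hαπ⟩ hα
  have h4 : (π - π/2)/2 = π/4 := by ring
  rw [h4] at step2
  simp only [smul_eq_mul] at step1
  linarith

end
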